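/- Let g : ℝ^d → ℝ ∪ {+∞} be proper, convex, closed, let α > 0, λ, λ' > 0, and a ∈ ℝ^d. Define φ_λ(u) = ½‖u − a‖₂² + α λ g(u), and let u' = prox_{α λ' g}(a) and u* = prox_{α λ g}(a). Then for all u ∈ ℝ^d: φ_λ(u) ≥ φ_λ(u') − α|λ' − λ| · |g(u') − g(u*)|; that is, u' is an ε-minimizer of φ_λ (equivalently 0 ∈ ∂_ε φ_λ(u')) with ε = α|λ' − λ| · |g(u') − g(u*)|. -/
import Mathlib


open scoped RealInnerProductSpace

/-- `p` is the proximal point of `F` at `a`, i.e. `p` minimizes `u ↦ ½‖u − a‖² + F(u)`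
(for a proper convex closed `F` this minimizer exists and is unique, so this predicate
characterizes `p = prox_F(a)`). -/
def IsProx {E : Type*} [NormedAddCommGroup E] (F : E → EReal) (a p : E) : Prop :=
  ∀ u, ((1 / 2 * ‖p - a‖ ^ 2 : ℝ) : EReal) + F p ≤ ((1 / 2 * ‖u - a‖ ^ 2 : ℝ) : EReal) + F u

lemma prox_g_ne_top {E : Type*} [NormedAddCommGroup E] (g : E → EReal)
    (hg_top : ∃ u, g u ≠ ⊤) (hg_bot : ∀ u, g u ≠ ⊥)
    (c : ℝ) (hc : 0 < c) (a p : E)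
    (hp : IsProx (fun w => ((c : ℝ) : EReal) * g w) a p) : g p ≠ ⊤ := by
  obtain ⟨u₀, h₀⟩ := hg_top
  intro htop
  have h := hp u₀
  simp only [htop] at h
  have hct : ((c : ℝ) : EReal) * (⊤ : EReal) = ⊤ :=
    EReal.mul_top_of_pos (by exact_mod_cast hc)
  rw [hct, EReal.add_top_of_ne_bot (by exact EReal.coe_ne_bot _)] at h
  lift g u₀ to ℝ using ⟨h₀, hg_bot u₀⟩ with G
  rw [← EReal.coe_mul, ← EReal.coe_add] at h
  exact (EReal.coe_lt_top _).not_ge (le_of_eq (top_le_iff.mp h).symm)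

/-- With `φ_λ(u) = ½‖u − a‖² + αλ g(u)`, `u' = prox_{αλ' g}(a)` and `u* = prox_{αλ g}(a)`,
one has `φ_λ(u) ≥ φ_λ(u') − α|λ' − λ|·|g(u') − g(u*)|` for all `u`; i.e. `u'` is an
`ε`-minimizer of `φ_λ` (equivalently `0 ∈ ∂_ε φ_λ(u')`) with
`ε = α|λ' − λ|·|g(u') − g(u*)|`. -/
theorem prox_with_perturbed_parameter_is_eps_minimizer {d : ℕ}
    (g : EuclideanSpace ℝ (Fin d) → EReal)
    (hg_top : ∃ u, g u ≠ ⊤) (hg_bot : ∀ u, g u ≠ ⊥)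
    (hg_conv : ∀ u v : EuclideanSpace ℝ (Fin d), ∀ a b : ℝ, 0 ≤ a → 0 ≤ b → a + b = 1 →
      g (a • u + b • v) ≤ (a : EReal) * g u + (b : EReal) * g v)
    (hg_lsc : LowerSemicontinuous g)
    (α lam lam' : ℝ) (hα : 0 < α) (hlam : 0 < lam) (hlam' : 0 < lam')
    (a u' ustar : EuclideanSpace ℝ (Fin d))
    (hu' : IsProx (fun w => ((α * lam' : ℝ) : EReal) * g w) a u')
    (hustar : IsProx (fun w => ((α * lam : ℝ) : EReal) * g w) a ustar) :
    ∀ u : EuclideanSpace ℝ (Fin d),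
      ((1 / 2 * ‖u - a‖ ^ 2 : ℝ) : EReal) + ((α * lam : ℝ) : EReal) * g u
        ≥ (((1 / 2 * ‖u' - a‖ ^ 2 : ℝ) : EReal) + ((α * lam : ℝ) : EReal) * g u')
          - ((α * |lam' - lam| * |(g u').toReal - (g ustar).toReal| : ℝ) : EReal) := by
  intro u
  have hcl' : (0:ℝ) < α * lam' := mul_pos hα hlam'
  have hcl : (0:ℝ) < α * lam := mul_pos hα hlam
  have hgu'_top : g u' ≠ ⊤ := prox_g_ne_top g hg_top hg_bot _ hcl' a u' hu'
  have hgus_top : g ustar ≠ ⊤ := prox_g_ne_top g hg_top hg_bot _ hcl a ustar hustar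
  set G' : ℝ := (g u').toReal with hG'
  set Gs : ℝ := (g ustar).toReal with hGs
  have hgu' : g u' = ((G' : ℝ) : EReal) := (EReal.coe_toReal hgu'_top (hg_bot u')).symm
  have hgus : g ustar = ((Gs : ℝ) : EReal) := (EReal.coe_toReal hgus_top (hg_bot ustar)).symm
  -- real inequality (1): from hu' applied at ustar
  have h1 : 1 / 2 * ‖u' - a‖ ^ 2 + (α * lam') * G' ≤ 1 / 2 * ‖ustar - a‖ ^ 2 + (α * lam') * Gs := by
    have := hu' ustar
    simp only [hgu', hgus, ← EReal.coe_mul, ← EReal.coe_add] at this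
    exact_mod_cast this
  -- key real inequality
  have hkey : 1 / 2 * ‖u' - a‖ ^ 2 + (α * lam) * G' -
      α * |lam' - lam| * |G' - Gs| ≤ 1 / 2 * ‖ustar - a‖ ^ 2 + (α * lam) * Gs := by
    have habs : (lam - lam') * (G' - Gs) ≤ |lam' - lam| * |G' - Gs| := by
      calc (lam - lam') * (G' - Gs) ≤ |(lam - lam') * (G' - Gs)| := le_abs_self _
        _ = |lam - lam'| * |G' - Gs| := abs_mul _ _
        _ = |lam' - lam| * |G' - Gs| := by rw [abs_sub_comm]
    nlinarith [habs, hα.le]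
  by_cases htop : g u = ⊤
  · have : ((α * lam : ℝ) : EReal) * g u = ⊤ := by
      rw [htop]; exact EReal.mul_top_of_pos (by exact_mod_cast hcl)
    rw [this, EReal.add_top_of_ne_bot (by exact EReal.coe_ne_bot _)]
    exact le_top
  · have hgu : g u = (((g u).toReal : ℝ) : EReal) := (EReal.coe_toReal htop (hg_bot u)).symm
    set Gu : ℝ := (g u).toReal
    have h2 : 1 / 2 * ‖ustar - a‖ ^ 2 + (α * lam) * Gs ≤ 1 / 2 * ‖u - a‖ ^ 2 + (α * lam) * Gu := by
      have := hustar u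
      simp only [hgu, hgus, ← EReal.coe_mul, ← EReal.coe_add] at this
      exact_mod_cast this
    simp only [hgu', hgu, ← EReal.coe_mul, ← EReal.coe_add, ← EReal.coe_sub, ge_iff_le,
      EReal.coe_le_coe_iff]
    linarith
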